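/- Let G and H be signed weighted graphs on the same finite vertex set V with d_cut(G⁺,H⁺) ≤ β. Then for every clustering 𝒞 = {C₁,…,C_k} of V, the quantity Σ_{1≤i<j≤k} (w_{H⁺}(C_i,C_j) − w_{G⁺}(C_i,C_j)) has absolute value at most 2β, where for disjoint sets S,T, w(S,T) := Σ_{u∈S,v∈T} w({u,v}). -/

import Mathlib

open Finset

/-- `pairSum w S T = Σ_{u ∈ S, v ∈ T, u ≠ v} w u v`. -/
noncomputable def pairSum {V : Type*} [Fintype V] [DecidableEq V]
    (w : V → V → ℝ) (S T : Finset V) : ℝ :=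
  ∑ u ∈ S, ∑ v ∈ T, if u = v then 0 else w u v

lemma count_lemma {k : ℕ} (a b : Fin (2 + k)) (hab : a ≠ b) :
    (∑ s : Fin (2 + k) → Bool,
      (if s a = true then (1:ℝ) else 0) * (if s b = true then 0 else 1)) = 2 ^ k := by
  classical
  have key : ∀ s : Fin (2 + k) → Bool,
      (if s a = true then (1:ℝ) else 0) * (if s b = true then 0 else 1)
        = ∏ i, (if i = a then (if s i = true then (1:ℝ) else 0)
            else if i = b then (if s i = true then 0 else 1) else 1) := by
    intro s
    rw [← Finset.prod_subset (Finset.subset_univ ({a, b} : Finset (Fin (2 + k))))]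
    · rw [Finset.prod_pair hab]
      simp [hab, Ne.symm hab]
    · intro i _ hi
      simp only [Finset.mem_insert, Finset.mem_singleton, not_or] at hi
      simp [hi.1, hi.2]
  calc (∑ s : Fin (2 + k) → Bool,
      (if s a = true then (1:ℝ) else 0) * (if s b = true then 0 else 1))
      = ∑ s : Fin (2 + k) → Bool, ∏ i, (if i = a then (if s i = true then (1:ℝ) else 0)
            else if i = b then (if s i = true then 0 else 1) else 1) :=
        Finset.sum_congr rfl fun s _ => key s
    _ = ∏ i, ∑ x : Bool, (if i = a then (if x = true then (1:ℝ) else 0)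
            else if i = b then (if x = true then 0 else 1) else 1) :=
        (Fintype.prod_sum (fun (i : Fin (2 + k)) (x : Bool) =>
          (if i = a then (if x = true then (1:ℝ) else 0)
            else if i = b then (if x = true then 0 else 1) else 1))).symm
    _ = ∏ i, (if i = a then (1:ℝ) else if i = b then 1 else 2) := by
        refine Finset.prod_congr rfl fun i _ => ?_
        rcases eq_or_ne i a with rfl | hia
        · simp
        · rcases eq_or_ne i b with rfl | hib
          · simp [hia]
          · simp only [if_neg hia, if_neg hib]
            norm_num
    _ = 2 ^ k := by
        rw [← Finset.prod_sdiff (Finset.subset_univ ({a, b} : Finset (Fin (2 + k))))]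
        have h1 : ∀ i ∈ Finset.univ \ ({a, b} : Finset (Fin (2 + k))),
            (if i = a then (1:ℝ) else if i = b then 1 else 2) = 2 := by
          intro i hi
          simp only [Finset.mem_sdiff, Finset.mem_insert, Finset.mem_singleton, not_or] at hi
          simp [hi.2.1, hi.2.2]
        have h2 : (∏ i ∈ ({a, b} : Finset (Fin (2 + k))),
            (if i = a then (1:ℝ) else if i = b then 1 else 2)) = 1 := by
          rw [Finset.prod_pair hab]
          simp [Ne.symm hab]
        rw [Finset.prod_congr rfl h1, Finset.prod_const, h2, mul_one]
        have hcard : (Finset.univ \ ({a, b} : Finset (Fin (2 + k)))).card = k := by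
          rw [Finset.card_sdiff_of_subset (Finset.subset_univ _)]
          rw [Finset.card_insert_of_notMem (by simpa using hab), Finset.card_singleton]
          simp
        rw [hcard]

theorem stmt1 {V : Type*} [Fintype V] [DecidableEq V]
    (Gp Hp : V → V → ℝ) (β : ℝ)
    (hGpsymm : ∀ u v, Gp u v = Gp v u) (hHpsymm : ∀ u v, Hp u v = Hp v u)
    (hGpnn : ∀ u v, 0 ≤ Gp u v) (hHpnn : ∀ u v, 0 ≤ Hp u v)
    (hcutp : ∀ S T : Finset V, |pairSum Gp S T - pairSum Hp S T| ≤ β)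
    {k : ℕ} (C : Fin k → Finset V)
    (hdisj : ∀ i j, i ≠ j → Disjoint (C i) (C j))
    (hcover : ∀ v : V, ∃ i, v ∈ C i)
    (hne : ∀ i, (C i).Nonempty) :
    |∑ i, ∑ j, if i < j then pairSum Hp (C i) (C j) - pairSum Gp (C i) (C j) else 0|
      ≤ 2 * β := by
  classical
  have hβ0 : 0 ≤ β := by
    have := hcutp ∅ ∅
    simpa [pairSum] using this
  set g : V → V → ℝ := fun u v => if u = v then 0 else Hp u v - Gp u v with hg
  have hgsymm : ∀ u v, g u v = g v u := by
    intro u v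
    rcases eq_or_ne u v with rfl | hne'
    · rfl
    · simp only [hg, if_neg hne', if_neg (Ne.symm hne'), hGpsymm u v, hHpsymm u v]
  set F : Finset V → Finset V → ℝ := fun S T => ∑ u ∈ S, ∑ v ∈ T, g u v with hFdef
  have hFeq : ∀ S T, pairSum Hp S T - pairSum Gp S T = F S T := by
    intro S T
    simp only [pairSum, hFdef, hg, ← Finset.sum_sub_distrib]
    refine Finset.sum_congr rfl fun u _ => Finset.sum_congr rfl fun v _ => ?_
    split <;> simp
  have hF : ∀ S T, |F S T| ≤ β := by
    intro S T
    rw [← hFeq, abs_sub_comm]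
    exact hcutp S T
  have hFsymm : ∀ S T, F S T = F T S := by
    intro S T
    simp only [hFdef]
    rw [Finset.sum_comm]
    exact Finset.sum_congr rfl fun v _ => Finset.sum_congr rfl fun u _ => hgsymm u v
  choose c hc using hcover
  have hmem : ∀ (v : V) (i : Fin k), v ∈ C i ↔ c v = i := by
    intro v i
    constructor
    · intro hvi
      by_contra hne'
      exact (Finset.disjoint_left.mp (hdisj (c v) i hne') (hc v)) hvi
    · rintro rfl; exact hc v
  have hCfilter : ∀ i, C i = Finset.univ.filter (fun v => c v = i) := by
    intro i; ext v; simp [hmem]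
  have hgoal : (∑ i, ∑ j, if i < j then pairSum Hp (C i) (C j) - pairSum Gp (C i) (C j) else 0)
      = ∑ i, ∑ j, if i < j then F (C i) (C j) else 0 := by
    refine Finset.sum_congr rfl fun i _ => Finset.sum_congr rfl fun j _ => ?_
    split
    · exact hFeq _ _
    · rfl
  rw [hgoal]
  rcases lt_or_ge k 2 with hk | hk
  · have hz : (∑ i, ∑ j, if i < j then F (C i) (C j) else 0) = 0 := by
      refine Finset.sum_eq_zero fun i _ => Finset.sum_eq_zero fun j _ => ?_
      rw [if_neg]
      omega
    rw [hz]
    simpa using by linarith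
  obtain ⟨m, rfl⟩ : ∃ m, k = 2 + m := ⟨k - 2, by omega⟩
  set T0 := ∑ i, ∑ j, if i < j then F (C i) (C j) else 0 with hT0
  set h : V → V → ℝ := fun u v => if c u = c v then 0 else g u v with hh
  set W := ∑ u, ∑ v, h u v with hW
  -- Claim 1 : W = 2 * T0
  have claim1 : W = 2 * T0 := by
    have e1 : W = ∑ i, ∑ u ∈ C i, ∑ v, h u v := by
      rw [hW, ← Finset.sum_fiberwise Finset.univ c (fun u => ∑ v, h u v)]
      exact Finset.sum_congr rfl fun i _ => Finset.sum_congr (hCfilter i).symm fun _ _ => rfl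
    have e2 : ∀ u : V, (∑ v, h u v) = ∑ j, ∑ v ∈ C j, h u v := by
      intro u
      rw [← Finset.sum_fiberwise Finset.univ c (fun v => h u v)]
      exact Finset.sum_congr rfl fun j _ => Finset.sum_congr (hCfilter j).symm fun _ _ => rfl
    have step1 : W = ∑ i, ∑ j, (if i = j then (0:ℝ) else F (C i) (C j)) := by
      rw [e1]
      refine Finset.sum_congr rfl fun i _ => ?_
      calc ∑ u ∈ C i, ∑ v, h u v = ∑ u ∈ C i, ∑ j, ∑ v ∈ C j, h u v :=
            Finset.sum_congr rfl fun u _ => e2 u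
        _ = ∑ j, ∑ u ∈ C i, ∑ v ∈ C j, h u v := Finset.sum_comm
        _ = ∑ j, (if i = j then (0:ℝ) else F (C i) (C j)) := by
            refine Finset.sum_congr rfl fun j _ => ?_
            rcases eq_or_ne i j with rfl | hij
            · rw [if_pos rfl]
              refine Finset.sum_eq_zero fun u hu => Finset.sum_eq_zero fun v hv => ?_
              simp only [hh]
              rw [if_pos]
              rw [(hmem u i).mp hu, (hmem v i).mp hv]
            · rw [if_neg hij]
              simp only [hFdef]
              refine Finset.sum_congr rfl fun u hu => Finset.sum_congr rfl fun v hv => ?_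
              simp only [hh]
              rw [if_neg]
              rw [(hmem u i).mp hu, (hmem v j).mp hv]
              exact hij
    have step2 : (∑ i, ∑ j, (if i = j then (0:ℝ) else F (C i) (C j)))
        = T0 + ∑ i, ∑ j, (if j < i then F (C i) (C j) else 0) := by
      rw [hT0, ← Finset.sum_add_distrib]
      refine Finset.sum_congr rfl fun i _ => ?_
      rw [← Finset.sum_add_distrib]
      refine Finset.sum_congr rfl fun j _ => ?_
      rcases lt_trichotomy i j with hij | rfl | hij
      · rw [if_neg (ne_of_lt hij), if_pos hij, if_neg (by omega), add_zero]
      · simp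
      · rw [if_neg (ne_of_gt hij), if_neg (by omega), if_pos hij, zero_add]
    have step3 : (∑ i, ∑ j, (if j < i then F (C i) (C j) else 0)) = T0 := by
      rw [hT0, Finset.sum_comm]
      refine Finset.sum_congr rfl fun i _ => Finset.sum_congr rfl fun j _ => ?_
      split
      · exact hFsymm _ _
      · rfl
    rw [step1, step2, step3]
    ring
  -- the averaging over all cuts
  set A : (Fin (2 + m) → Bool) → Finset V :=
    fun s => Finset.univ.filter (fun v => s (c v) = true) with hA
  set B : (Fin (2 + m) → Bool) → Finset V :=
    fun s => Finset.univ.filter (fun v => s (c v) = false) with hB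
  set P := ∑ s : Fin (2 + m) → Bool, F (A s) (B s) with hP
  have hPbound : |P| ≤ 2 ^ (2 + m) * β := by
    calc |P| ≤ ∑ s : Fin (2 + m) → Bool, |F (A s) (B s)| := Finset.abs_sum_le_sum_abs _ _
      _ ≤ ∑ _s : Fin (2 + m) → Bool, β := Finset.sum_le_sum fun s _ => hF _ _
      _ = 2 ^ (2 + m) * β := by
          rw [Finset.sum_const, Finset.card_univ, nsmul_eq_mul]
          congr 1
          rw [Fintype.card_fun]
          simp
  have hN : ∀ a b : Fin (2 + m),
      (∑ s : Fin (2 + m) → Bool, (if s a = true then (1:ℝ) else 0) * (if s b = true then 0 else 1))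
        = if a = b then 0 else 2 ^ m := by
    intro a b
    rcases eq_or_ne a b with rfl | hab
    · rw [if_pos rfl]
      refine Finset.sum_eq_zero fun s _ => ?_
      cases hsa : s a <;> simp [hsa]
    · rw [if_neg hab]
      exact count_lemma a b hab
  have hPeq : P = 2 ^ m * W := by
    have hFA : ∀ s : Fin (2 + m) → Bool, F (A s) (B s)
        = ∑ u, ∑ v, (if s (c u) = true then (1:ℝ) else 0)
            * (if s (c v) = true then 0 else 1) * g u v := by
      intro s
      simp only [hFdef, hA, hB, Finset.sum_filter]
      refine Finset.sum_congr rfl fun u _ => ?_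
      by_cases h1 : s (c u) = true
      · rw [if_pos h1]
        refine Finset.sum_congr rfl fun v _ => ?_
        by_cases h2 : s (c v) = true
        · rw [if_neg (by simp [h2]), if_pos h1, if_pos h2]
          ring
        · rw [if_pos (by simpa using h2), if_pos h1, if_neg h2]
          ring
      · rw [if_neg h1]
        refine (Finset.sum_eq_zero fun v _ => ?_).symm
        rw [if_neg h1]
        ring
    calc P = ∑ s : Fin (2 + m) → Bool, ∑ u, ∑ v, (if s (c u) = true then (1:ℝ) else 0)
            * (if s (c v) = true then 0 else 1) * g u v :=
          Finset.sum_congr rfl fun s _ => hFA s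
      _ = ∑ u, ∑ s : Fin (2 + m) → Bool, ∑ v, (if s (c u) = true then (1:ℝ) else 0)
            * (if s (c v) = true then 0 else 1) * g u v := Finset.sum_comm
      _ = ∑ u, ∑ v, ∑ s : Fin (2 + m) → Bool, (if s (c u) = true then (1:ℝ) else 0)
            * (if s (c v) = true then 0 else 1) * g u v :=
          Finset.sum_congr rfl fun u _ => Finset.sum_comm
      _ = ∑ u, ∑ v, (if c u = c v then (0:ℝ) else 2 ^ m) * g u v := by
          refine Finset.sum_congr rfl fun u _ => Finset.sum_congr rfl fun v _ => ?_
          rw [← Finset.sum_mul, hN (c u) (c v)]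
      _ = 2 ^ m * W := by
          rw [hW, Finset.mul_sum]
          refine Finset.sum_congr rfl fun u _ => ?_
          rw [Finset.mul_sum]
          refine Finset.sum_congr rfl fun v _ => ?_
          simp only [hh]
          rcases eq_or_ne (c u) (c v) with hcuv | hcuv
          · rw [if_pos hcuv, if_pos hcuv]
            ring
          · rw [if_neg hcuv, if_neg hcuv]
  -- finish
  have hfin : (2:ℝ) ^ m * (2 * |T0|) ≤ 2 ^ (2 + m) * β := by
    have : |P| = 2 ^ m * (2 * |T0|) := by
      rw [hPeq, claim1, abs_mul, abs_mul]
      rw [abs_of_nonneg (by positivity : (0:ℝ) ≤ 2 ^ m)]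
      norm_num
    linarith [hPbound, this.symm.le, this.le]
  have h2m : (0:ℝ) < 2 ^ m := by positivity
  have hpow : (2:ℝ) ^ (2 + m) = 2 ^ m * 4 := by
    rw [pow_add]
    ring
  rw [hpow] at hfin
  have hfin' : (2:ℝ) ^ m * (2 * |T0|) ≤ 2 ^ m * (4 * β) := by linarith
  have := (mul_le_mul_iff_of_pos_left h2m).mp hfin'
  linarith
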